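/- arXiv:2010.05860 — 3 statements merged into one kernel-verified Lean document; each statement's English description precedes it below -/
import Mathlib

section
/- Let H : [0,∞) → ℝ be continuous and suppose there exist constants C ≥ 0 and λ > 0 such that |H(t)| ≤ C·e^(−λt) for all t ≥ 0. If ∫₀^∞ t^k · H(t) dt = 0 for every integer k ≥ 0, then H(t) = 0 for all t ≥ 0. -/
open MeasureTheory Set
open scoped Nat

noncomputable section

namespace VanishingMomentsAux


lemma factorial_le_pow_mul (k j : ℕ) : (j + k)! ≤ (j + k) ^ k * j ! := by
  induction k with
  | zero => simp
  | succ k ih =>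
    have h1 : (j + (k + 1))! = (j + k + 1) * (j + k)! := by
      rw [show j + (k + 1) = (j + k) + 1 by ring, Nat.factorial_succ]
    rw [h1]
    calc (j + k + 1) * (j + k)! ≤ (j + k + 1) * ((j + k) ^ k * j !) :=
          Nat.mul_le_mul_left _ ih
      _ ≤ (j + k + 1) * ((j + k + 1) ^ k * j !) :=
          Nat.mul_le_mul_left _ (Nat.mul_le_mul_right _ (Nat.pow_le_pow_left (Nat.le_succ _) k))
      _ = (j + (k + 1)) ^ (k + 1) * j ! := by ring

lemma integrableOn_pow_mul_exp {μ : ℝ} (hμ : 0 < μ) (n : ℕ) :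
    IntegrableOn (fun t : ℝ => t ^ n * Real.exp (-μ * t)) (Ioi 0) := by
  have h := integrableOn_rpow_mul_exp_neg_mul_rpow (s := (n : ℝ)) (p := 1) (b := μ)
      (lt_of_lt_of_le (by norm_num) (Nat.cast_nonneg n)) one_pos hμ
  refine h.congr_fun (fun x hx => ?_) measurableSet_Ioi
  dsimp only
  rw [Real.rpow_one, Real.rpow_natCast]

lemma integral_pow_mul_exp {μ : ℝ} (hμ : 0 < μ) (n : ℕ) :
    ∫ t in Ioi (0:ℝ), t ^ n * Real.exp (-μ * t) = n ! / μ ^ (n + 1) := by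
  have h := Real.integral_rpow_mul_exp_neg_mul_Ioi (a := (n : ℝ) + 1) (by positivity) hμ
  rw [Real.Gamma_nat_eq_factorial] at h
  have h2 : ∫ t in Ioi (0:ℝ), t ^ ((n : ℝ) + 1 - 1) * Real.exp (-(μ * t))
      = ∫ t in Ioi (0:ℝ), t ^ n * Real.exp (-μ * t) := by
    refine setIntegral_congr_fun measurableSet_Ioi (fun x hx => ?_)
    rw [add_sub_cancel_right, Real.rpow_natCast, neg_mul]
  rw [h2] at h
  rw [h, show ((n:ℝ) + 1) = ((n + 1 : ℕ) : ℝ) by push_cast; ring, Real.rpow_natCast,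
    one_div, inv_pow, mul_comm, div_eq_mul_inv]

lemma integral_norm_pow_mul_le {G : ℝ → ℝ} {C μ : ℝ} (hC : 0 ≤ C) (hμ : 0 < μ)
    (hGm : AEStronglyMeasurable G (volume.restrict (Ioi 0)))
    (hb : ∀ t : ℝ, 0 ≤ t → |G t| ≤ C * Real.exp (-μ * t)) (n : ℕ) :
    IntegrableOn (fun t => t ^ n * G t) (Ioi 0) ∧
      ∫ t in Ioi (0:ℝ), ‖t ^ n * G t‖ ≤ C * (n ! / μ ^ (n + 1)) := by
  have hGint : IntegrableOn (fun t => C * (t ^ n * Real.exp (-μ * t))) (Ioi 0) :=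
    (integrableOn_pow_mul_exp hμ n).const_mul C
  have hbound : ∀ t ∈ Ioi (0:ℝ), ‖t ^ n * G t‖ ≤ C * (t ^ n * Real.exp (-μ * t)) := by
    intro t ht
    have ht0 : (0:ℝ) ≤ t := le_of_lt ht
    have htn : (0:ℝ) ≤ t ^ n := pow_nonneg ht0 n
    rw [norm_mul, Real.norm_eq_abs, Real.norm_eq_abs, abs_pow, abs_of_nonneg ht0]
    calc t ^ n * |G t| ≤ t ^ n * (C * Real.exp (-μ * t)) :=
          mul_le_mul_of_nonneg_left (hb t ht0) htn
      _ = C * (t ^ n * Real.exp (-μ * t)) := by ring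
  have hint : IntegrableOn (fun t => t ^ n * G t) (Ioi 0) := by
    refine Integrable.mono' hGint ((continuous_pow n).aestronglyMeasurable.mul hGm) ?_
    exact (ae_restrict_iff' measurableSet_Ioi).2 (Filter.Eventually.of_forall hbound)
  refine ⟨hint, ?_⟩
  have hmono := setIntegral_mono_on hint.norm hGint measurableSet_Ioi hbound
  refine hmono.trans_eq ?_
  rw [integral_const_mul, integral_pow_mul_exp hμ n]

set_option maxHeartbeats 2000000 in
lemma shifted_moments (G : ℝ → ℝ)
    (hGm : AEStronglyMeasurable G (volume.restrict (Ioi 0)))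
    {C μ : ℝ} (hC : 0 ≤ C) (hμ : 0 < μ)
    (hb : ∀ t : ℝ, 0 ≤ t → |G t| ≤ C * Real.exp (-μ * t))
    (hm : ∀ k : ℕ, ∫ t in Ioi (0:ℝ), t ^ k * G t = 0)
    {a : ℝ} (ha : |a| ≤ μ / 2) (k : ℕ) :
    ∫ t in Ioi (0:ℝ), t ^ k * (Real.exp (-a * t) * G t) = 0 := by
  set F : ℕ → ℝ → ℝ := fun j t => ((-a) ^ j / j !) * (t ^ (k + j) * G t) with hF
  have hint := fun n => integral_norm_pow_mul_le hC hμ hGm hb n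
  have hFint : ∀ j, Integrable (F j) (volume.restrict (Ioi 0)) :=
    fun j => ((hint (k + j)).1).const_mul _
  have hFsum : Summable (fun j => ∫ t in Ioi (0:ℝ), ‖F j t‖) := by
    have hmaj : Summable (fun j : ℕ =>
        (C / μ ^ (k + 1) * 2 ^ k) * (((j + k : ℕ) : ℝ) ^ k * (1 / 2 : ℝ) ^ (j + k))) := by
      apply Summable.mul_left
      have hs : Summable (fun n : ℕ => (n : ℝ) ^ k * (1 / 2 : ℝ) ^ n) :=
        summable_pow_mul_geometric_of_norm_lt_one (R := ℝ) k
          (r := (1 / 2 : ℝ)) (by norm_num [Real.norm_eq_abs])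
      exact (summable_nat_add_iff k).2 hs
    refine Summable.of_nonneg_of_le
      (fun j => integral_nonneg fun t => norm_nonneg _) (fun j => ?_) hmaj
    have h1 : ∫ t in Ioi (0:ℝ), ‖F j t‖
        = (|a| ^ j / j !) * ∫ t in Ioi (0:ℝ), ‖t ^ (k + j) * G t‖ := by
      rw [← integral_const_mul]
      refine setIntegral_congr_fun measurableSet_Ioi (fun t ht => ?_)
      simp only [hF]
      rw [norm_mul]
      congr 1
      rw [Real.norm_eq_abs, abs_div, abs_pow, abs_neg, Nat.abs_cast]
    rw [h1]
    have hfac : (((k + j)! : ℕ) : ℝ) ≤ ((j + k : ℕ) : ℝ) ^ k * ((j ! : ℕ) : ℝ) := by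
      exact_mod_cast (by rw [Nat.add_comm k j]; exact factorial_le_pow_mul k j :
        (k + j)! ≤ (j + k) ^ k * j !)
    have haj : |a| ^ j ≤ (μ / 2) ^ j := pow_le_pow_left₀ (abs_nonneg a) ha j
    have hjfac : (0:ℝ) < (j ! : ℕ) := by exact_mod_cast Nat.factorial_pos j
    have hd1 : (0:ℝ) ≤ |a| ^ j / j ! := by positivity
    have hd2 : (0:ℝ) ≤ (μ / 2) ^ j / j ! := by positivity
    have hμm : (0:ℝ) < μ ^ ((k + j) + 1) := by positivity
    calc (|a| ^ j / j !) * ∫ t in Ioi (0:ℝ), ‖t ^ (k + j) * G t‖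
        ≤ (|a| ^ j / j !) * (C * (((k + j)! : ℕ) / μ ^ ((k + j) + 1))) :=
          mul_le_mul_of_nonneg_left ((hint (k + j)).2) hd1
      _ ≤ ((μ / 2) ^ j / j !) * (C * ((((j + k : ℕ) : ℝ) ^ k * ((j ! : ℕ) : ℝ)) / μ ^ ((k + j) + 1))) := by
          exact mul_le_mul ((div_le_div_iff_of_pos_right hjfac).2 haj)
            (mul_le_mul_of_nonneg_left ((div_le_div_iff_of_pos_right hμm).2 hfac) hC)
            (by positivity) hd2
      _ = (C / μ ^ (k + 1) * 2 ^ k) * (((j + k : ℕ) : ℝ) ^ k * (1 / 2 : ℝ) ^ (j + k)) := by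
          rw [div_pow μ 2 j, div_pow (1:ℝ) 2 (j+k), one_pow, pow_add (2:ℝ) j k,
            show (k + j) + 1 = (k + 1) + j by ring, pow_add μ (k+1) j]
          have h2j : (2:ℝ) ^ j ≠ 0 := by positivity
          have h2k : (2:ℝ) ^ k ≠ 0 := by positivity
          have hμj : μ ^ j ≠ 0 := by positivity
          have hμk : μ ^ (k+1) ≠ 0 := by positivity
          have hjf : (j ! : ℝ) ≠ 0 := by positivity
          field_simp
  have htsum : ∀ t : ℝ, HasSum (fun j => F j t) (t ^ k * (Real.exp (-a * t) * G t)) := by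
    intro t
    have h := NormedSpace.expSeries_div_hasSum_exp (𝔸 := ℝ) (-a * t)
    rw [← Real.exp_eq_exp_ℝ] at h
    have h2 := h.mul_right (t ^ k * G t)
    have heq : (fun j : ℕ => ((-a * t) ^ j / (j ! : ℝ)) * (t ^ k * G t)) = fun j => F j t := by
      funext j
      simp only [hF]
      rw [mul_pow, pow_add]
      ring
    rw [heq] at h2
    rw [show t ^ k * (Real.exp (-a * t) * G t) = Real.exp (-a * t) * (t ^ k * G t) by ring]
    exact h2
  have hkey := MeasureTheory.hasSum_integral_of_summable_integral_norm hFint hFsum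
  have hzero : (fun j => ∫ t in Ioi (0:ℝ), F j t) = fun _ => (0:ℝ) := by
    funext j
    simp only [hF]
    rw [integral_const_mul, hm (k + j), mul_zero]
  rw [hzero] at hkey
  have h4 : (fun t : ℝ => ∑' j, F j t) = fun t => t ^ k * (Real.exp (-a * t) * G t) :=
    funext fun t => (htsum t).tsum_eq
  have h5 := hkey.unique hasSum_zero
  rw [h4] at h5
  exact h5


end VanishingMomentsAux

end

set_option maxHeartbeats 1000000 in
open VanishingMomentsAux in
/-- If `H : [0,∞) → ℝ` is continuous, decays exponentially (`|H t| ≤ C e^{-λ t}`),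
and all its moments `∫₀^∞ t^k H(t) dt` vanish, then `H ≡ 0` on `[0,∞)`. -/
theorem vanishing_moments_implies_zero
    (H : ℝ → ℝ) (hcont : ContinuousOn H (Set.Ici 0))
    (C lam : ℝ) (hC : 0 ≤ C) (hlam : 0 < lam)
    (hbound : ∀ t : ℝ, 0 ≤ t → |H t| ≤ C * Real.exp (-lam * t))
    (hmom : ∀ k : ℕ, ∫ t in Set.Ioi (0 : ℝ), t ^ k * H t = 0) :
    ∀ t : ℝ, 0 ≤ t → H t = 0 := by
  have hmeas : AEStronglyMeasurable H (volume.restrict (Ioi 0)) :=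
    (hcont.mono Ioi_subset_Ici_self).aestronglyMeasurable measurableSet_Ioi
  set G : ℝ → ℝ → ℝ := fun c t => Real.exp (-c * t) * H t with hGdef
  have hGmeas : ∀ c : ℝ, AEStronglyMeasurable (G c) (volume.restrict (Ioi 0)) := fun c =>
    ((Real.continuous_exp.comp (continuous_mul_left (-c))).aestronglyMeasurable).mul hmeas
  have hGbound : ∀ c : ℝ, 0 ≤ c → ∀ t : ℝ, 0 ≤ t →
      |G c t| ≤ C * Real.exp (-(lam + c) * t) := by
    intro c hc t ht
    simp only [hGdef]
    rw [abs_mul, abs_of_nonneg (Real.exp_pos _).le]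
    calc Real.exp (-c * t) * |H t| ≤ Real.exp (-c * t) * (C * Real.exp (-lam * t)) :=
        mul_le_mul_of_nonneg_left (hbound t ht) (Real.exp_pos _).le
      _ = C * Real.exp (-c * t + -lam * t) := by rw [Real.exp_add]; ring
      _ = C * Real.exp (-(lam + c) * t) := by ring_nf
  have hmain : ∀ n : ℕ, ∀ k : ℕ,
      ∫ t in Ioi (0:ℝ), t ^ k * G ((n : ℝ) * (lam / 2)) t = 0 := by
    intro n
    induction n with
    | zero =>
      intro k
      have he : ∀ t ∈ Ioi (0:ℝ), t ^ k * G (((0:ℕ) : ℝ) * (lam / 2)) t = t ^ k * H t := by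
        intro t ht
        simp [hGdef]
      rw [setIntegral_congr_fun measurableSet_Ioi he]
      exact hmom k
    | succ n ih =>
      intro k
      have hμpos : (0:ℝ) < lam + (n : ℝ) * (lam / 2) := by positivity
      have ha : |lam / 2| ≤ (lam + (n : ℝ) * (lam / 2)) / 2 := by
        rw [abs_of_nonneg (by positivity)]
        have hn0 : (0:ℝ) ≤ (n : ℝ) := Nat.cast_nonneg n
        nlinarith
      have h := shifted_moments (G ((n : ℝ) * (lam / 2))) (hGmeas _) hC hμpos
        (hGbound _ (by positivity)) ih ha k
      have he : ∀ t ∈ Ioi (0:ℝ),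
          t ^ k * (Real.exp (-(lam / 2) * t) * G ((n : ℝ) * (lam / 2)) t)
          = t ^ k * G (((n + 1 : ℕ) : ℝ) * (lam / 2)) t := by
        intro t ht
        simp only [hGdef]
        have hxy : -(((n + 1 : ℕ) : ℝ) * (lam / 2)) * t
            = -(lam / 2) * t + -((n : ℝ) * (lam / 2)) * t := by push_cast; ring
        rw [hxy, Real.exp_add]
        ring
      rw [← setIntegral_congr_fun measurableSet_Ioi he]
      exact h
  have hallc : ∀ c : ℝ, 0 ≤ c → ∫ t in Ioi (0:ℝ), Real.exp (-c * t) * H t = 0 := by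
    intro c hc
    set n : ℕ := ⌈c / (lam / 2)⌉₊ with hn
    have hl2 : (0:ℝ) < lam / 2 := by positivity
    have hn1 : c ≤ (n : ℝ) * (lam / 2) := by
      have h := Nat.le_ceil (c / (lam / 2))
      calc c = c / (lam / 2) * (lam / 2) := by field_simp
        _ ≤ (n : ℝ) * (lam / 2) := mul_le_mul_of_nonneg_right h hl2.le
    have hn2 : (n : ℝ) * (lam / 2) ≤ c + lam / 2 := by
      have h := (Nat.ceil_lt_add_one (by positivity : (0:ℝ) ≤ c / (lam / 2))).le
      calc (n : ℝ) * (lam / 2) ≤ (c / (lam / 2) + 1) * (lam / 2) :=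
            mul_le_mul_of_nonneg_right h hl2.le
        _ = c + lam / 2 := by field_simp
    have hμpos : (0:ℝ) < lam + (n : ℝ) * (lam / 2) := by positivity
    have ha : |c - (n : ℝ) * (lam / 2)| ≤ (lam + (n : ℝ) * (lam / 2)) / 2 := by
      rw [abs_le]
      constructor
      · nlinarith
      · nlinarith
    have h := shifted_moments (G ((n : ℝ) * (lam / 2))) (hGmeas _) hC hμpos
      (hGbound _ (by positivity)) (hmain n) ha 0
    have he : ∀ t ∈ Ioi (0:ℝ),
        t ^ 0 * (Real.exp (-(c - (n : ℝ) * (lam / 2)) * t) * G ((n : ℝ) * (lam / 2)) t)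
        = Real.exp (-c * t) * H t := by
      intro t ht
      simp only [hGdef, pow_zero, one_mul]
      rw [show -c * t = -(c - (n : ℝ) * (lam / 2)) * t + -((n : ℝ) * (lam / 2)) * t by ring,
        Real.exp_add]
      ring
    rw [← setIntegral_congr_fun measurableSet_Ioi he]
    exact h
  -- the substituted function on [0,1]
  set g : ℝ → ℝ := fun x => if x = 0 then 0 else H (-Real.log x) with hgdef
  have hgx : ∀ t : ℝ, g (Real.exp (-t)) = H t := by
    intro t
    simp only [hgdef]
    rw [if_neg (Real.exp_ne_zero _), Real.log_exp, neg_neg]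
  have hgbound : ∀ x ∈ Ioc (0:ℝ) 1, |g x| ≤ C * x ^ lam := by
    intro x hx
    simp only [hgdef]
    rw [if_neg (ne_of_gt hx.1)]
    have hlog : 0 ≤ -Real.log x := by
      rw [neg_nonneg]
      exact Real.log_nonpos hx.1.le hx.2
    calc |H (-Real.log x)| ≤ C * Real.exp (-lam * -Real.log x) := hbound _ hlog
      _ = C * x ^ lam := by
        rw [Real.rpow_def_of_pos hx.1]
        congr 1
        ring
  have hgcont : ContinuousOn g (Icc 0 1) := by
    intro x hx
    rcases eq_or_ne x 0 with rfl | hx0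
    · have h0 : g 0 = 0 := by simp [hgdef]
      have htend : Filter.Tendsto g (nhdsWithin 0 (Icc 0 1)) (nhds (g 0)) := by
        rw [h0]
        have hb1 : ∀ᶠ y in nhdsWithin 0 (Icc (0:ℝ) 1), ‖g y‖ ≤ C * y ^ lam := by
          filter_upwards [self_mem_nhdsWithin] with y hy
          rcases eq_or_ne y 0 with rfl | hy0
          · simp [hgdef, Real.zero_rpow hlam.ne']
          · have hy' : y ∈ Ioc (0:ℝ) 1 := ⟨lt_of_le_of_ne hy.1 (Ne.symm hy0), hy.2⟩
            simpa [Real.norm_eq_abs] using hgbound y hy'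
        have hc : ContinuousAt (fun y : ℝ => y ^ lam) 0 :=
          Real.continuousAt_rpow_const 0 lam (Or.inr hlam.le)
        have hb2 := (hc.tendsto.mono_left
          (nhdsWithin_le_nhds (s := Icc (0:ℝ) 1))).const_mul C
        rw [Real.zero_rpow hlam.ne', mul_zero] at hb2
        exact squeeze_zero_norm' hb1 hb2
      exact htend
    · have hx' : x ∈ Ioc (0:ℝ) 1 := ⟨lt_of_le_of_ne hx.1 (Ne.symm hx0), hx.2⟩
      have hcomp : ContinuousOn (fun y => H (-Real.log y)) (Ioc (0:ℝ) 1) := by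
        refine hcont.comp ((Real.continuousOn_log.mono ?_).neg) ?_
        · intro y hy
          exact mem_compl_singleton_iff.2 (ne_of_gt hy.1)
        · intro y hy
          rw [mem_Ici, neg_nonneg]
          exact Real.log_nonpos hy.1.le hy.2
      have h1 : ContinuousWithinAt (fun y => H (-Real.log y)) (Ioc 0 1) x := hcomp x hx'
      have h2 : ContinuousWithinAt (fun y => H (-Real.log y)) (Icc 0 1) x := by
        refine h1.mono_of_mem_nhdsWithin ?_
        refine Filter.mem_of_superset (inter_mem_nhdsWithin (Icc 0 1) (Ioi_mem_nhds hx'.1)) ?_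
        rintro y ⟨hy1, hy2⟩
        exact ⟨hy2, hy1.2⟩
      refine h2.congr_of_eventuallyEq ?_ ?_
      · filter_upwards [mem_nhdsWithin_of_mem_nhds (Ioi_mem_nhds hx'.1)] with y hy
        simp [hgdef, ne_of_gt (mem_Ioi.1 hy)]
      · simp [hgdef, hx0]
  -- change of variables
  have himage : (fun t : ℝ => Real.exp (-t)) '' (Ioi 0) = Ioo 0 1 := by
    ext x
    constructor
    · rintro ⟨t, ht, rfl⟩
      refine ⟨Real.exp_pos _, ?_⟩
      rw [Real.exp_lt_one_iff]
      have := mem_Ioi.1 ht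
      linarith
    · intro hx
      refine ⟨-Real.log x, ?_, ?_⟩
      · rw [mem_Ioi]
        exact neg_pos.2 (Real.log_neg hx.1 hx.2)
      · show Real.exp (-(-Real.log x)) = x
        rw [neg_neg, Real.exp_log hx.1]
  have hcv : ∀ m : ℕ, ∫ x in Ioo (0:ℝ) 1, x ^ m * g x = 0 := by
    intro m
    have hderiv : ∀ t ∈ Ioi (0:ℝ),
        HasDerivWithinAt (fun t => Real.exp (-t)) (-Real.exp (-t)) (Ioi 0) t := by
      intro t ht
      have h := (hasDerivAt_neg t).exp
      simpa using h.hasDerivWithinAt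
    have hinj : InjOn (fun t : ℝ => Real.exp (-t)) (Ioi 0) := by
      intro t1 _ t2 _ h
      have := Real.exp_injective h
      linarith [neg_injective this]
    have hchg := integral_image_eq_integral_abs_deriv_smul measurableSet_Ioi hderiv hinj
      (fun x => x ^ m * g x)
    rw [himage] at hchg
    rw [hchg]
    have he : ∀ t ∈ Ioi (0:ℝ), |(-Real.exp (-t))| • ((Real.exp (-t)) ^ m * g (Real.exp (-t)))
        = Real.exp (-((m : ℝ) + 1) * t) * H t := by
      intro t ht
      rw [hgx, abs_neg, abs_of_pos (Real.exp_pos _), smul_eq_mul, ← Real.exp_nat_mul,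
        show -((m : ℝ) + 1) * t = (m : ℝ) * -t + -t by ring, Real.exp_add]
      ring
    rw [setIntegral_congr_fun measurableSet_Ioi he]
    exact hallc ((m : ℝ) + 1) (by positivity)
  -- integrability on (0,1)
  have hgint : ∀ m : ℕ, IntegrableOn (fun x => x ^ m * g x) (Ioo (0:ℝ) 1) := fun m =>
    (((continuous_pow m).continuousOn.mul hgcont).integrableOn_compact isCompact_Icc).mono_set
      Ioo_subset_Icc_self
  have hgint2 : IntegrableOn (fun x => g x * g x) (Ioo (0:ℝ) 1) :=
    ((hgcont.mul hgcont).integrableOn_compact isCompact_Icc).mono_set Ioo_subset_Icc_self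
  -- vanishing against polynomials
  have hpint : ∀ p : Polynomial ℝ, ∫ x in Ioo (0:ℝ) 1, p.eval x * g x = 0 := by
    intro p
    have he : ∀ x : ℝ, p.eval x * g x
        = ∑ m ∈ Finset.range (p.natDegree + 1), p.coeff m * (x ^ m * g x) := by
      intro x
      rw [Polynomial.eval_eq_sum_range, Finset.sum_mul]
      refine Finset.sum_congr rfl fun m _ => ?_
      ring
    simp_rw [he]
    rw [integral_finset_sum _ (fun m _ => ((hgint m).const_mul _))]
    refine Finset.sum_eq_zero fun m _ => ?_
    rw [integral_const_mul, hcv m, mul_zero]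
  -- the L² argument via Weierstrass
  have hg2 : ∫ x in Ioo (0:ℝ) 1, g x * g x = 0 := by
    have hroof : ∀ ε : ℝ, 0 < ε → |∫ x in Ioo (0:ℝ) 1, g x * g x| ≤ ε := by
      intro ε hε
      set δ : ℝ := ε / (C + 1) with hδ
      have hδpos : 0 < δ := by positivity
      obtain ⟨p, hp⟩ := exists_polynomial_near_of_continuousOn 0 1 g hgcont δ hδpos
      have hpg := hpint p
      have hdiff : ∫ x in Ioo (0:ℝ) 1, (g x - p.eval x) * g x
          = ∫ x in Ioo (0:ℝ) 1, g x * g x := by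
        have hpgint : IntegrableOn (fun x => p.eval x * g x) (Ioo (0:ℝ) 1) :=
          (((Polynomial.continuous p).continuousOn.mul hgcont).integrableOn_compact
            isCompact_Icc).mono_set Ioo_subset_Icc_self
        have := integral_sub hgint2 hpgint
        simp_rw [sub_mul]
        rw [this, hpg, sub_zero]
      have hboundp : ∀ x ∈ Ioo (0:ℝ) 1, ‖(g x - p.eval x) * g x‖ ≤ δ * C := by
        intro x hx
        have hx' : x ∈ Ioc (0:ℝ) 1 := ⟨hx.1, hx.2.le⟩
        have h1 : |g x - p.eval x| ≤ δ := by
          rw [abs_sub_comm]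
          exact (hp x ⟨hx.1.le, hx.2.le⟩).le
        have h2 : |g x| ≤ C := by
          refine (hgbound x hx').trans ?_
          have : x ^ lam ≤ 1 := Real.rpow_le_one hx.1.le hx.2.le hlam.le
          nlinarith
        rw [norm_mul, Real.norm_eq_abs, Real.norm_eq_abs]
        exact mul_le_mul h1 h2 (abs_nonneg _) hδpos.le
      have hvol : volume (Ioo (0:ℝ) 1) < ⊤ := measure_Ioo_lt_top
      have hmeas3 : AEStronglyMeasurable (fun x => (g x - p.eval x) * g x)
          (volume.restrict (Ioo (0:ℝ) 1)) :=
        (((hgcont.mono Ioo_subset_Icc_self).sub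
          (Polynomial.continuous p).continuousOn).mul
          (hgcont.mono Ioo_subset_Icc_self)).aestronglyMeasurable measurableSet_Ioo
      have hnorm := norm_setIntegral_le_of_norm_le_const hvol hboundp
      rw [hdiff] at hnorm
      refine (le_trans (by simpa [Real.norm_eq_abs] using hnorm) ?_)
      rw [hδ, div_mul_eq_mul_div, div_le_iff₀ (by positivity)]
      nlinarith
    have h1 : |∫ x in Ioo (0:ℝ) 1, g x * g x| ≤ 0 := by
      by_contra hcon
      push_neg at hcon
      have := hroof (|∫ x in Ioo (0:ℝ) 1, g x * g x| / 2) (by linarith)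
      linarith
    have := abs_nonneg (∫ x in Ioo (0:ℝ) 1, g x * g x)
    have habs : |∫ x in Ioo (0:ℝ) 1, g x * g x| = 0 := le_antisymm h1 this
    exact abs_eq_zero.1 habs
  -- g vanishes on (0,1)
  have hgzero : ∀ x ∈ Ioo (0:ℝ) 1, g x = 0 := by
    by_contra hcon
    push_neg at hcon
    obtain ⟨x₀, hx₀, hgx₀⟩ := hcon
    have hU : IsOpen (Ioo (0:ℝ) 1 ∩ g ⁻¹' ({0}ᶜ)) :=
      (hgcont.mono Ioo_subset_Icc_self).isOpen_inter_preimage isOpen_Ioo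
        isOpen_compl_singleton
    have hne : (Ioo (0:ℝ) 1 ∩ g ⁻¹' ({0}ᶜ)).Nonempty := ⟨x₀, hx₀, hgx₀⟩
    have hpos := hU.measure_pos volume hne
    have hae : ∀ᵐ x ∂volume, x ∈ Ioo (0:ℝ) 1 → g x * g x = 0 := by
      have h := (integral_eq_zero_iff_of_nonneg
        (fun x => mul_self_nonneg (g x)) hgint2).1 hg2
      have h2 : ∀ᵐ x ∂(volume.restrict (Ioo (0:ℝ) 1)), g x * g x = 0 := by
        filter_upwards [h] with x hx
        simpa using hx
      exact (ae_restrict_iff' measurableSet_Ioo).1 h2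
    have hzero : volume (Ioo (0:ℝ) 1 ∩ g ⁻¹' ({0}ᶜ)) = 0 := by
      refine measure_mono_null ?_ (ae_iff.1 hae)
      rintro x ⟨hx1, hx2⟩
      simp only [mem_setOf_eq, not_forall]
      refine ⟨hx1, ?_⟩
      intro h
      exact hx2 (mul_self_eq_zero.1 h)
    rw [hzero] at hpos
    exact lt_irrefl 0 hpos
  -- conclusion
  intro t ht
  have hIoi : ∀ s : ℝ, 0 < s → H s = 0 := by
    intro s hs
    have hmem : Real.exp (-s) ∈ Ioo (0:ℝ) 1 := by
      refine ⟨Real.exp_pos _, ?_⟩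
      rw [Real.exp_lt_one_iff]
      linarith
    have := hgzero _ hmem
    rwa [hgx] at this
  rcases eq_or_lt_of_le ht with rfl | ht'
  · have h1 : Filter.Tendsto H (nhdsWithin 0 (Ioi 0)) (nhds (H 0)) :=
      (hcont 0 (mem_Ici.2 le_rfl)).mono_left (nhdsWithin_mono _ Ioi_subset_Ici_self)
    have h2 : Filter.Tendsto H (nhdsWithin 0 (Ioi 0)) (nhds 0) := by
      refine Filter.Tendsto.congr' ?_ tendsto_const_nhds
      filter_upwards [self_mem_nhdsWithin] with s hs
      exact (hIoi s (mem_Ioi.1 hs)).symm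
    exact tendsto_nhds_unique h1 h2
  · exact hIoi t ht'
end

section
/- Let f, g : (0,∞) → ℝ be continuous, nonnegative functions such that ∫₀^∞ e^(−st) f(t) dt < ∞ and ∫₀^∞ e^(−st) g(t) dt < ∞ for every s > 0. If the self-convolutions agree, i.e. ∫₀^t f(τ)·f(t−τ) dτ = ∫₀^t g(τ)·g(t−τ) dτ for every t > 0, then f(t) = g(t) for all t > 0. -/
open MeasureTheory Set

lemma poly_laplace_aux (h : ℝ → ℝ)
    (hint : ∀ s : ℝ, 0 < s →
      IntegrableOn (fun t : ℝ => Real.exp (-s * t) * h t) (Set.Ioi 0) volume)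
    (hL : ∀ s : ℝ, 0 < s → ∫ t in Set.Ioi 0, Real.exp (-s * t) * h t = 0)
    (P : Polynomial ℝ) :
    IntegrableOn (fun t : ℝ => Real.exp (-t) * Polynomial.eval (Real.exp (-t)) P * h t)
        (Set.Ioi 0) volume ∧
      ∫ t in Set.Ioi 0, Real.exp (-t) * Polynomial.eval (Real.exp (-t)) P * h t = 0 := by
  induction P using Polynomial.induction_on' with
  | add p q hp hq =>
      have key : (fun t : ℝ => Real.exp (-t) * Polynomial.eval (Real.exp (-t)) (p + q) * h t)
          = (fun t : ℝ => Real.exp (-t) * Polynomial.eval (Real.exp (-t)) p * h t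
              + Real.exp (-t) * Polynomial.eval (Real.exp (-t)) q * h t) := by
        funext t; simp [Polynomial.eval_add]; ring
      rw [key]
      exact ⟨hp.1.add hq.1, by rw [integral_add hp.1 hq.1, hp.2, hq.2, add_zero]⟩
  | monomial n a =>
      have hs : (0:ℝ) < (n:ℝ) + 1 := by positivity
      have key : (fun t : ℝ => Real.exp (-t) * Polynomial.eval (Real.exp (-t))
            (Polynomial.monomial n a) * h t)
          = (fun t : ℝ => a * (Real.exp (-((n:ℝ)+1) * t) * h t)) := by
        funext t
        rw [Polynomial.eval_monomial,
          show (-((n:ℝ)+1) * t) = (-t) + (n:ℝ) * (-t) by ring, Real.exp_add,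
          Real.exp_nat_mul]
        ring
      rw [key]
      refine ⟨(hint _ hs).const_mul a, ?_⟩
      rw [integral_const_mul, hL _ hs, mul_zero]

set_option maxHeartbeats 1000000 in
lemma laplace_nonpos (h : ℝ → ℝ) (hc : ContinuousOn h (Set.Ioi 0))
    (hint : ∀ s : ℝ, 0 < s →
      IntegrableOn (fun t : ℝ => Real.exp (-s * t) * h t) (Set.Ioi 0) volume)
    (hL : ∀ s : ℝ, 0 < s → ∫ t in Set.Ioi 0, Real.exp (-s * t) * h t = 0) :
    ∀ t : ℝ, 0 < t → h t ≤ 0 := by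
  intro t₀ ht₀
  by_contra hpos
  push_neg at hpos
  set δ := h t₀ / 2 with hδdef
  have hδ : 0 < δ := by positivity
  have hca : ContinuousAt h t₀ := hc.continuousAt (Ioi_mem_nhds ht₀)
  have hev : ∀ᶠ t in nhds t₀, δ < h t :=
    hca.eventually (eventually_gt_nhds (by simp only [hδdef]; linarith))
  rw [Metric.eventually_nhds_iff] at hev
  obtain ⟨ε, hε, hball⟩ := hev
  set r := min (ε/2) (t₀/2) with hrdef
  have hr : 0 < r := lt_min (by positivity) (by positivity)
  have hrt : r ≤ t₀/2 := min_le_right _ _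
  have hδh : ∀ t : ℝ, |t - t₀| ≤ r → δ ≤ h t := by
    intro t ht
    refine (hball ?_).le
    rw [Real.dist_eq]
    calc |t - t₀| ≤ r := ht
      _ ≤ ε/2 := min_le_left _ _
      _ < ε := by linarith
  set x₀ := Real.exp (-t₀) with hx₀def
  have hx₀ : 0 < x₀ := Real.exp_pos _
  have hx₀1 : x₀ < 1 := Real.exp_lt_one_iff.mpr (by linarith)
  have h1r : Real.exp (-r) < 1 := Real.exp_lt_one_iff.mpr (by linarith)
  set ρ := min (x₀ * (1 - Real.exp (-r))) ((1 - x₀)/2) with hρdef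
  have hρ : 0 < ρ := lt_min (by nlinarith) (by linarith)
  have hρa : ρ ≤ x₀ * (1 - Real.exp (-r)) := min_le_left _ _
  have hρx : ρ < x₀ := by nlinarith [Real.exp_pos (-r)]
  have hρ1 : x₀ + ρ < 1 := by
    have hle : ρ ≤ (1 - x₀)/2 := min_le_right _ _
    linarith
  have hρlt1 : ρ < 1 := hρx.trans hx₀1
  set u1 := -Real.log (x₀ + ρ) with hu1def
  set u2 := -Real.log (x₀ - ρ) with hu2def
  have e1 : Real.exp (-u1) = x₀ + ρ := by
    rw [hu1def, neg_neg, Real.exp_log (by positivity)]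
  have e2 : Real.exp (-u2) = x₀ - ρ := by
    rw [hu2def, neg_neg, Real.exp_log (by linarith)]
  have hiff : ∀ t : ℝ, t ∈ Set.Icc u1 u2 ↔
      (x₀ - ρ ≤ Real.exp (-t) ∧ Real.exp (-t) ≤ x₀ + ρ) := by
    intro t
    constructor
    · rintro ⟨h1, h2⟩
      exact ⟨by rw [← e2]; exact Real.exp_le_exp.mpr (by linarith),
             by rw [← e1]; exact Real.exp_le_exp.mpr (by linarith)⟩
    · rintro ⟨h1, h2⟩
      have k1 : Real.exp (-t) ≤ Real.exp (-u1) := by rw [e1]; exact h2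
      have k2 : Real.exp (-u2) ≤ Real.exp (-t) := by rw [e2]; exact h1
      have l1 := Real.exp_le_exp.mp k1
      have l2 := Real.exp_le_exp.mp k2
      exact ⟨by linarith, by linarith⟩
  have hu1 : 0 < u1 := by
    have : Real.log (x₀ + ρ) < 0 := Real.log_neg (by positivity) hρ1
    simp only [hu1def]; linarith
  set A := Set.Icc u1 u2 with hAdef
  have hAsub : A ⊆ Set.Ioi 0 := fun t ht => lt_of_lt_of_le hu1 ht.1
  have hAN : ∀ t ∈ A, δ ≤ h t := by
    intro t ht
    obtain ⟨hlo, hhi⟩ := (hiff t).mp ht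
    have k1 : -(t₀ + r) ≤ -t := by
      apply Real.exp_le_exp.mp
      calc Real.exp (-(t₀ + r)) = x₀ * Real.exp (-r) := by
            rw [show -(t₀ + r) = -t₀ + -r by ring, Real.exp_add]
        _ ≤ x₀ - ρ := by nlinarith
        _ ≤ Real.exp (-t) := hlo
    have k2 : -t ≤ -(t₀ - r) := by
      apply Real.exp_le_exp.mp
      have he : 1 - Real.exp (-r) ≤ Real.exp r - 1 := by
        have a1 := Real.add_one_le_exp r
        have a2 := Real.add_one_le_exp (-r)
        linarith
      calc Real.exp (-t) ≤ x₀ + ρ := hhi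
        _ ≤ x₀ * Real.exp r := by nlinarith
        _ = Real.exp (-(t₀ - r)) := by
            rw [show -(t₀ - r) = -t₀ + r by ring, Real.exp_add]
    exact hδh t (abs_le.mpr ⟨by linarith, by linarith⟩)
  have hfrac1 : 0 < 1 - ρ/(2*x₀) := by
    have : ρ/(2*x₀) < 1 := by
      rw [div_lt_one (by positivity)]; linarith
    linarith
  have hfrac2 : 1 - ρ/(2*x₀) < 1 := by
    have : 0 < ρ/(2*x₀) := by positivity
    linarith
  set s₁ := -Real.log (1 - ρ/(2*x₀)) with hs₁def
  have hs₁ : 0 < s₁ := by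
    have : Real.log (1 - ρ/(2*x₀)) < 0 := Real.log_neg hfrac1 hfrac2
    simp only [hs₁def]; linarith
  set I := Set.Icc t₀ (t₀ + s₁) with hIdef
  have hIfacts : ∀ t ∈ I, x₀ - ρ/2 ≤ Real.exp (-t) ∧ Real.exp (-t) ≤ x₀ := by
    rintro t ⟨ha, hb⟩
    constructor
    · have hmon : Real.exp (-(t₀ + s₁)) ≤ Real.exp (-t) := Real.exp_le_exp.mpr (by linarith)
      have e : Real.exp (-(t₀ + s₁)) = x₀ * (1 - ρ/(2*x₀)) := by
        rw [show -(t₀ + s₁) = -t₀ + -s₁ by ring, Real.exp_add]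
        congr 1
        rw [hs₁def, neg_neg, Real.exp_log hfrac1]
      have e' : x₀ * (1 - ρ/(2*x₀)) = x₀ - ρ/2 := by field_simp
      rw [e, e'] at hmon
      exact hmon
    · exact Real.exp_le_exp.mpr (by linarith)
  have hIA : I ⊆ A := by
    intro t ht
    obtain ⟨h1, h2⟩ := hIfacts t ht
    exact (hiff t).mpr ⟨by linarith, by linarith⟩
  have habs : IntegrableOn (fun t : ℝ => Real.exp (-t) * |h t|) (Set.Ioi 0) volume := by
    have h1 : IntegrableOn (fun t : ℝ => |Real.exp (-1 * t) * h t|) (Set.Ioi 0) volume :=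
      (hint 1 one_pos).abs
    refine h1.congr_fun ?_ measurableSet_Ioi
    intro t _
    simp only [neg_one_mul]
    rw [abs_mul, abs_of_pos (Real.exp_pos _)]
  set M := ∫ t in Set.Ioi 0, Real.exp (-t) * |h t| with hMdef
  set K := 1 + ρ^2/2 with hKdef
  have hK : 1 < K := by simp only [hKdef]; nlinarith
  set c := (x₀/2) * δ * s₁ with hcdef
  have hc : 0 < c := by positivity
  have key : ∀ n : ℕ, c * K^n ≤ M := by
    intro n
    have hPP := poly_laplace_aux h hint hL
      ((Polynomial.C (1 + ρ^2) - 2*(Polynomial.X - Polynomial.C x₀)^2)^n)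
    have hfun : (fun t : ℝ => Real.exp (-t) * Polynomial.eval (Real.exp (-t))
          ((Polynomial.C (1 + ρ^2) - 2*(Polynomial.X - Polynomial.C x₀)^2)^n) * h t)
        = (fun t : ℝ => Real.exp (-t) * (1 + ρ^2 - 2*(Real.exp (-t) - x₀)^2)^n * h t) := by
      funext t; simp
    rw [hfun] at hPP
    obtain ⟨hPint, hPzero⟩ := hPP
    have hsplit : (∫ t in Set.Ioi 0 ∩ A,
          Real.exp (-t) * (1 + ρ^2 - 2*(Real.exp (-t) - x₀)^2)^n * h t)
        + ∫ t in Set.Ioi 0 \ A,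
            Real.exp (-t) * (1 + ρ^2 - 2*(Real.exp (-t) - x₀)^2)^n * h t = 0 := by
      rw [integral_inter_add_diff measurableSet_Icc hPint]
      exact hPzero
    rw [Set.inter_eq_self_of_subset_right hAsub] at hsplit
    have hqB : ∀ t ∈ Set.Ioi 0 \ A,
        |Real.exp (-t) * (1 + ρ^2 - 2*(Real.exp (-t) - x₀)^2)^n * h t|
          ≤ Real.exp (-t) * |h t| := by
      rintro t ⟨ht0, htA⟩
      have hx : 0 < Real.exp (-t) := Real.exp_pos _
      have hx1 : Real.exp (-t) < 1 := by
        have h0 : (0:ℝ) < t := ht0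
        exact Real.exp_lt_one_iff.mpr (by linarith)
      have hd : ρ^2 ≤ (Real.exp (-t) - x₀)^2 := by
        have hn := (not_iff_not.mpr (hiff t)).mp htA
        rcases not_and_or.mp hn with hlt | hlt
        · push_neg at hlt
          calc ρ^2 ≤ (x₀ - Real.exp (-t))^2 := pow_le_pow_left₀ hρ.le (by linarith) 2
            _ = (Real.exp (-t) - x₀)^2 := by ring
        · push_neg at hlt
          exact pow_le_pow_left₀ hρ.le (by linarith) 2
      have hd1 : (Real.exp (-t) - x₀)^2 ≤ 1 := by
        have := sq_le_sq' (by linarith : -(1:ℝ) ≤ Real.exp (-t) - x₀) (by linarith)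
        simpa using this
      have hbase : |1 + ρ^2 - 2*(Real.exp (-t) - x₀)^2| ≤ 1 := by
        rw [abs_le]
        constructor <;> [linarith [sq_nonneg ρ]; linarith [sq_nonneg (Real.exp (-t) - x₀)]]
      have hq1 : |Real.exp (-t) * (1 + ρ^2 - 2*(Real.exp (-t) - x₀)^2)^n * h t|
          = Real.exp (-t) * |1 + ρ^2 - 2*(Real.exp (-t) - x₀)^2|^n * |h t| := by
        rw [abs_mul, abs_mul, abs_of_pos hx, abs_pow]
      rw [hq1]
      have hpow : |1 + ρ^2 - 2*(Real.exp (-t) - x₀)^2|^n ≤ 1 :=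
        pow_le_one₀ (abs_nonneg _) hbase
      have hstep := mul_le_mul_of_nonneg_left hpow hx.le
      have := mul_le_mul_of_nonneg_right hstep (abs_nonneg (h t))
      calc Real.exp (-t) * |1 + ρ^2 - 2*(Real.exp (-t) - x₀)^2|^n * |h t|
          ≤ Real.exp (-t) * 1 * |h t| := this
        _ = Real.exp (-t) * |h t| := by ring
    have hB : |∫ t in Set.Ioi 0 \ A,
        Real.exp (-t) * (1 + ρ^2 - 2*(Real.exp (-t) - x₀)^2)^n * h t| ≤ M := by
      calc |∫ t in Set.Ioi 0 \ A,
            Real.exp (-t) * (1 + ρ^2 - 2*(Real.exp (-t) - x₀)^2)^n * h t|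
          ≤ ∫ t in Set.Ioi 0 \ A,
              |Real.exp (-t) * (1 + ρ^2 - 2*(Real.exp (-t) - x₀)^2)^n * h t| := by
            exact
              norm_integral_le_integral_norm (μ := volume.restrict (Set.Ioi 0 \ A))
                (fun t : ℝ => Real.exp (-t) * (1 + ρ^2 - 2*(Real.exp (-t) - x₀)^2)^n * h t)
        _ ≤ ∫ t in Set.Ioi 0 \ A, Real.exp (-t) * |h t| :=
            setIntegral_mono_on ((hPint.mono_set diff_subset).abs)
              (habs.mono_set diff_subset) (measurableSet_Ioi.diff measurableSet_Icc) hqB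
        _ ≤ M := by
            refine setIntegral_mono_set habs ?_ (HasSubset.Subset.eventuallyLE diff_subset)
            exact ae_of_all _ fun t => by positivity
    have hqA : ∀ t ∈ A, 0 ≤ Real.exp (-t) * (1 + ρ^2 - 2*(Real.exp (-t) - x₀)^2)^n * h t := by
      intro t ht
      obtain ⟨hlo, hhi⟩ := (hiff t).mp ht
      have hsq : (Real.exp (-t) - x₀)^2 ≤ ρ^2 :=
        sq_le_sq' (by linarith) (by linarith)
      have hbase : 0 ≤ 1 + ρ^2 - 2*(Real.exp (-t) - x₀)^2 := by
        linarith [pow_le_one₀ hρ.le hρlt1.le (n := 2)]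
      have hh : 0 ≤ h t := hδ.le.trans (hAN t ht)
      exact mul_nonneg (mul_nonneg (Real.exp_pos _).le (pow_nonneg hbase n)) hh
    have hAI : (∫ t in I, Real.exp (-t) * (1 + ρ^2 - 2*(Real.exp (-t) - x₀)^2)^n * h t)
        ≤ ∫ t in A, Real.exp (-t) * (1 + ρ^2 - 2*(Real.exp (-t) - x₀)^2)^n * h t := by
      refine setIntegral_mono_set (hPint.mono_set hAsub) ?_
        (HasSubset.Subset.eventuallyLE hIA)
      exact (ae_restrict_iff' measurableSet_Icc).mpr (ae_of_all _ hqA)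
    have hIlow : c * K^n
        ≤ ∫ t in I, Real.exp (-t) * (1 + ρ^2 - 2*(Real.exp (-t) - x₀)^2)^n * h t := by
      have hub : ∀ t ∈ I,
          (x₀/2) * K^n * δ ≤ Real.exp (-t) * (1 + ρ^2 - 2*(Real.exp (-t) - x₀)^2)^n * h t := by
        intro t ht
        have hh := hAN t (hIA ht)
        obtain ⟨h1, h2⟩ := hIfacts t ht
        clear hfun hPint hPzero hsplit hqB hB hqA hAI hint hL habs hδh hiff hball hca hAN
          hIfacts hIA hAsub
        have hxl : x₀/2 ≤ Real.exp (-t) := by linarith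
        have hsq : (Real.exp (-t) - x₀)^2 ≤ ρ^2/4 := by
          have h3 := sq_le_sq' (by linarith : -(ρ/2) ≤ Real.exp (-t) - x₀) (by linarith)
          calc (Real.exp (-t) - x₀)^2 ≤ (ρ/2)^2 := h3
            _ = ρ^2/4 := by ring
        have hKb : K ≤ 1 + ρ^2 - 2*(Real.exp (-t) - x₀)^2 := by
          simp only [hKdef]; linarith
        have hKn : K^n ≤ (1 + ρ^2 - 2*(Real.exp (-t) - x₀)^2)^n :=
          pow_le_pow_left₀ (by linarith : (0:ℝ) ≤ K) hKb n
        have hKnn : (0:ℝ) ≤ K^n := by positivity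
        have step1 : (x₀/2) * K^n ≤ Real.exp (-t) * (1 + ρ^2 - 2*(Real.exp (-t) - x₀)^2)^n :=
          mul_le_mul hxl hKn hKnn (Real.exp_pos _).le
        have hnn : (0:ℝ) ≤ Real.exp (-t) * (1 + ρ^2 - 2*(Real.exp (-t) - x₀)^2)^n := by
          have hb : (0:ℝ) ≤ (1 + ρ^2 - 2*(Real.exp (-t) - x₀)^2)^n :=
            pow_nonneg (by linarith [sq_nonneg ρ]) n
          exact mul_nonneg (Real.exp_pos _).le hb
        calc (x₀/2) * K^n * δ
            ≤ Real.exp (-t) * (1 + ρ^2 - 2*(Real.exp (-t) - x₀)^2)^n * δ :=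
              mul_le_mul_of_nonneg_right step1 hδ.le
          _ ≤ Real.exp (-t) * (1 + ρ^2 - 2*(Real.exp (-t) - x₀)^2)^n * h t :=
              mul_le_mul_of_nonneg_left hh hnn
      have hIvol : volume I ≠ ⊤ := by
        rw [hIdef, Real.volume_Icc]; exact ENNReal.ofReal_ne_top
      have hlow := setIntegral_ge_of_const_le measurableSet_Icc hIvol hub
        (hPint.mono_set (hIA.trans hAsub))
      have hvol : (volume I).toReal = s₁ := by
        rw [hIdef, Real.volume_Icc, ENNReal.toReal_ofReal (by linarith)]
        ring
      rw [measureReal_def, ← hIdef, hvol, smul_eq_mul, mul_comm] at hlow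
      calc c * K^n = (x₀/2) * K^n * δ * s₁ := by rw [hcdef]; ring
        _ ≤ _ := hlow
    have hfinA : (∫ t in A, Real.exp (-t) * (1 + ρ^2 - 2*(Real.exp (-t) - x₀)^2)^n * h t)
        ≤ M := by
      have hneg : (∫ t in A, Real.exp (-t) * (1 + ρ^2 - 2*(Real.exp (-t) - x₀)^2)^n * h t)
          = -(∫ t in Set.Ioi 0 \ A,
              Real.exp (-t) * (1 + ρ^2 - 2*(Real.exp (-t) - x₀)^2)^n * h t) := by linarith
      rw [hneg]
      exact (neg_le_abs _).trans hB
    linarith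
  obtain ⟨n, hn⟩ := pow_unbounded_of_one_lt (M/c) hK
  have h2 := key n
  rw [div_lt_iff₀ hc] at hn
  nlinarith


lemma laplace_transforms_eq
    (f g : ℝ → ℝ)
    (hfcont : ContinuousOn f (Set.Ioi 0)) (hgcont : ContinuousOn g (Set.Ioi 0))
    (hfpos : ∀ t : ℝ, 0 < t → 0 ≤ f t) (hgpos : ∀ t : ℝ, 0 < t → 0 ≤ g t)
    (hfint : ∀ s : ℝ, 0 < s →
      IntegrableOn (fun t : ℝ => Real.exp (-s * t) * f t) (Set.Ioi 0) volume)
    (hgint : ∀ s : ℝ, 0 < s →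
      IntegrableOn (fun t : ℝ => Real.exp (-s * t) * g t) (Set.Ioi 0) volume)
    (hconv : ∀ t : ℝ, 0 < t →
      (∫ τ in Set.Ioo (0 : ℝ) t, f τ * f (t - τ))
        = ∫ τ in Set.Ioo (0 : ℝ) t, g τ * g (t - τ)) :
    ∀ s : ℝ, 0 < s → (∫ t in Set.Ioi 0, Real.exp (-s * t) * f t)
      = ∫ t in Set.Ioi 0, Real.exp (-s * t) * g t := by
  intro s hs
  have lhs_eq : ∀ F : ℝ → ℝ,
      (∫ x in Set.Ioi (0:ℝ), ∫ t in (0:ℝ)..x,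
          (Real.exp (-s * t) * F t) * (Real.exp (-s * (x - t)) * F (x - t)))
        = ∫ x in Set.Ioi (0:ℝ), Real.exp (-s * x) * ∫ t in Set.Ioo 0 x, F t * F (x - t) := by
    intro F
    refine setIntegral_congr_fun measurableSet_Ioi fun x hx => ?_
    rw [intervalIntegral.integral_of_le (le_of_lt hx),
      MeasureTheory.integral_Ioc_eq_integral_Ioo, ← MeasureTheory.integral_const_mul]
    refine setIntegral_congr_fun measurableSet_Ioo fun t _ => ?_
    have he : Real.exp (-s * t) * Real.exp (-s * (x - t)) = Real.exp (-s * x) := by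
      rw [← Real.exp_add]; ring_nf
    calc (Real.exp (-s * t) * F t) * (Real.exp (-s * (x - t)) * F (x - t))
        = (Real.exp (-s * t) * Real.exp (-s * (x - t))) * (F t * F (x - t)) := by ring
      _ = Real.exp (-s * x) * (F t * F (x - t)) := by rw [he]
  have cf := integral_posConvolution (hfint s hs) (hfint s hs) (ContinuousLinearMap.mul ℝ ℝ)
  have cg := integral_posConvolution (hgint s hs) (hgint s hs) (ContinuousLinearMap.mul ℝ ℝ)
  simp only [ContinuousLinearMap.mul_apply'] at cf cg
  rw [lhs_eq f] at cf
  rw [lhs_eq g] at cg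
  have conv_eq : (∫ x in Set.Ioi (0:ℝ), Real.exp (-s * x) * ∫ t in Set.Ioo 0 x, f t * f (x - t))
      = ∫ x in Set.Ioi (0:ℝ), Real.exp (-s * x) * ∫ t in Set.Ioo 0 x, g t * g (x - t) :=
    setIntegral_congr_fun measurableSet_Ioi fun x hx => by rw [hconv x hx]
  have sq_eq : (∫ t in Set.Ioi 0, Real.exp (-s * t) * f t)
        * (∫ t in Set.Ioi 0, Real.exp (-s * t) * f t)
      = (∫ t in Set.Ioi 0, Real.exp (-s * t) * g t)
        * (∫ t in Set.Ioi 0, Real.exp (-s * t) * g t) := by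
    rw [← cf, ← cg, conv_eq]
  have h1 : 0 ≤ ∫ t in Set.Ioi 0, Real.exp (-s * t) * f t :=
    setIntegral_nonneg measurableSet_Ioi fun t ht =>
      mul_nonneg (Real.exp_pos _).le (hfpos t ht)
  have h2 : 0 ≤ ∫ t in Set.Ioi 0, Real.exp (-s * t) * g t :=
    setIntegral_nonneg measurableSet_Ioi fun t ht =>
      mul_nonneg (Real.exp_pos _).le (hgpos t ht)
  rcases mul_self_eq_mul_self_iff.mp sq_eq with h | h
  · exact h
  · linarith


/-- Two continuous nonnegative functions on `(0,∞)`, each with convergent Laplace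
transform for all `s > 0`, whose self-convolutions agree, must be equal. -/
theorem selfconvolution_determines_function
    (f g : ℝ → ℝ)
    (hfcont : ContinuousOn f (Set.Ioi 0)) (hgcont : ContinuousOn g (Set.Ioi 0))
    (hfpos : ∀ t : ℝ, 0 < t → 0 ≤ f t) (hgpos : ∀ t : ℝ, 0 < t → 0 ≤ g t)
    (hfint : ∀ s : ℝ, 0 < s →
      IntegrableOn (fun t : ℝ => Real.exp (-s * t) * f t) (Set.Ioi 0) volume)
    (hgint : ∀ s : ℝ, 0 < s →
      IntegrableOn (fun t : ℝ => Real.exp (-s * t) * g t) (Set.Ioi 0) volume)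
    (hconv : ∀ t : ℝ, 0 < t →
      (∫ τ in Set.Ioo (0 : ℝ) t, f τ * f (t - τ))
        = ∫ τ in Set.Ioo (0 : ℝ) t, g τ * g (t - τ)) :
    ∀ t : ℝ, 0 < t → f t = g t := by
  have lap := laplace_transforms_eq f g hfcont hgcont hfpos hgpos hfint hgint hconv
  have hint1 : ∀ s : ℝ, 0 < s →
      IntegrableOn (fun t : ℝ => Real.exp (-s * t) * (f t - g t)) (Set.Ioi 0) volume := by
    intro s hs
    have := (hfint s hs).sub (hgint s hs)
    simpa [mul_sub, Pi.sub_def] using this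
  have hL1 : ∀ s : ℝ, 0 < s →
      ∫ t in Set.Ioi 0, Real.exp (-s * t) * (f t - g t) = 0 := by
    intro s hs
    have key : (fun t : ℝ => Real.exp (-s * t) * (f t - g t))
        = fun t : ℝ => Real.exp (-s * t) * f t - Real.exp (-s * t) * g t := by
      funext t; ring
    rw [key, integral_sub (hfint s hs) (hgint s hs), lap s hs, sub_self]
  have hint2 : ∀ s : ℝ, 0 < s →
      IntegrableOn (fun t : ℝ => Real.exp (-s * t) * (g t - f t)) (Set.Ioi 0) volume := by
    intro s hs
    have := (hgint s hs).sub (hfint s hs)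
    simpa [mul_sub, Pi.sub_def] using this
  have hL2 : ∀ s : ℝ, 0 < s →
      ∫ t in Set.Ioi 0, Real.exp (-s * t) * (g t - f t) = 0 := by
    intro s hs
    have key : (fun t : ℝ => Real.exp (-s * t) * (g t - f t))
        = fun t : ℝ => Real.exp (-s * t) * g t - Real.exp (-s * t) * f t := by
      funext t; ring
    rw [key, integral_sub (hgint s hs) (hfint s hs), lap s hs, sub_self]
  intro t ht
  have h1 := laplace_nonpos (fun t => f t - g t) (hfcont.sub hgcont) hint1 hL1 t ht
  have h2 := laplace_nonpos (fun t => g t - f t) (hgcont.sub hfcont) hint2 hL2 t ht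
  linarith
end

section
/- Let Y be a nonempty set and F : (0,∞) × Y → ℝ a function such that for each y ∈ Y the function t ↦ F(t,y) is continuous and nonnegative on (0,∞) and satisfies ∫₀^∞ e^(−st) F(t,y) dt < ∞ for every s > 0. Suppose there exists a function γ : (0,∞) → ℝ such that ∫₀^t F(τ,y)·F(t−τ,y) dτ = γ(t) for every t > 0 and every y ∈ Y. Then F(t,y₁) = F(t,y₂) for all t > 0 and all y₁, y₂ ∈ Y. -/
open MeasureTheory Set

namespace SelfConvAux

open Real Filter
open scoped ENNReal

/-! ### Auxiliary: lintegral Laplace transform of a self-convolution -/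

noncomputable def lapK (g : ℝ → ℝ) (s : ℝ) : ℝ → ℝ≥0∞ :=
  fun t => ENNReal.ofReal (Real.exp (-s * t) * g t)

noncomputable def selfconv (g : ℝ → ℝ) : ℝ → ℝ≥0∞ :=
  fun t => ∫⁻ τ, ENNReal.ofReal (g τ) * ENNReal.ofReal (g (t - τ))

variable {g : ℝ → ℝ}

lemma measurable_lapK (hg : Measurable g) (s : ℝ) : Measurable (lapK g s) :=
  ENNReal.measurable_ofReal.comp ((Real.measurable_exp.comp (measurable_id.const_mul (-s))).mul hg)

lemma measurable_selfconv (hg : Measurable g) : Measurable (selfconv g) := by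
  apply Measurable.lintegral_prod_right
  exact (ENNReal.measurable_ofReal.comp (hg.comp measurable_snd)).mul
    (ENNReal.measurable_ofReal.comp (hg.comp (measurable_fst.sub measurable_snd)))

lemma selfconv_restrict (hg0 : ∀ t ≤ 0, g t = 0) (t : ℝ) :
    selfconv g t = ∫⁻ τ in Ioo 0 t, ENNReal.ofReal (g τ) * ENNReal.ofReal (g (t - τ)) := by
  rw [selfconv, ← lintegral_indicator measurableSet_Ioo]
  congr 1; funext τ
  by_cases h1 : τ ∈ Ioo 0 t
  · rw [indicator_of_mem h1]
  · rw [indicator_of_notMem h1]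
    rcases le_or_gt τ 0 with h | h
    · rw [hg0 τ h]; simp
    · have h2 : t - τ ≤ 0 := by
        by_contra hc; push_neg at hc; exact h1 ⟨h, by linarith⟩
      rw [hg0 _ h2]; simp

lemma lapK_conv (hg0 : ∀ t ≤ 0, g t = 0) (s t : ℝ) :
    ENNReal.ofReal (Real.exp (-s * t)) * selfconv g t
      = ∫⁻ τ, lapK g s τ * lapK g s (t - τ) := by
  rw [selfconv, ← lintegral_const_mul' _ _ ENNReal.ofReal_ne_top]
  congr 1; funext τ
  have he : Real.exp (-s * t) = Real.exp (-s * τ) * Real.exp (-s * (t - τ)) := by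
    rw [← Real.exp_add]; ring_nf
  rw [lapK, lapK, he, ENNReal.ofReal_mul (Real.exp_pos _).le,
    ENNReal.ofReal_mul (Real.exp_pos _).le, ENNReal.ofReal_mul (Real.exp_pos _).le]
  ring

lemma lintegral_Ioi_of_zero (Φ : ℝ → ℝ≥0∞) (h : ∀ t ≤ 0, Φ t = 0) :
    ∫⁻ t in Ioi 0, Φ t = ∫⁻ t, Φ t := by
  rw [← lintegral_indicator measurableSet_Ioi]
  congr 1; funext t
  by_cases ht : t ∈ Ioi 0
  · rw [indicator_of_mem ht]
  · rw [indicator_of_notMem ht, h t (by simpa using ht)]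

lemma laplace_selfconv (hg : Measurable g) (hg0 : ∀ t ≤ 0, g t = 0) (s : ℝ) :
    ∫⁻ t in Ioi 0, ENNReal.ofReal (Real.exp (-s * t)) * selfconv g t
      = (∫⁻ t in Ioi 0, lapK g s t) * ∫⁻ t in Ioi 0, lapK g s t := by
  have hK : Measurable (lapK g s) := measurable_lapK hg s
  have hlapzero : ∀ t ≤ 0, lapK g s t = 0 := fun t ht => by simp [lapK, hg0 t ht]
  have hzero : ∀ t ≤ 0, (∫⁻ τ, lapK g s τ * lapK g s (t - τ)) = 0 := by
    intro t ht
    have h0 : (fun τ => lapK g s τ * lapK g s (t - τ)) = fun _ => 0 := by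
      funext τ
      rcases le_or_gt τ 0 with h | h
      · simp [lapK, hg0 τ h]
      · have h2 : t - τ ≤ 0 := by linarith
        simp [lapK, hg0 _ h2]
    rw [h0, lintegral_zero]
  calc ∫⁻ t in Ioi 0, ENNReal.ofReal (Real.exp (-s * t)) * selfconv g t
      = ∫⁻ t in Ioi 0, ∫⁻ τ, lapK g s τ * lapK g s (t - τ) :=
        setLIntegral_congr_fun measurableSet_Ioi
          (fun t _ => lapK_conv hg0 s t)
    _ = ∫⁻ t, ∫⁻ τ, lapK g s τ * lapK g s (t - τ) := lintegral_Ioi_of_zero _ hzero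
    _ = ∫⁻ τ, ∫⁻ t, lapK g s τ * lapK g s (t - τ) := by
        apply lintegral_lintegral_swap
        exact ((hK.comp measurable_snd).mul
          (hK.comp (measurable_fst.sub measurable_snd))).aemeasurable
    _ = ∫⁻ τ, lapK g s τ * ∫⁻ t, lapK g s (t - τ) := by
        congr 1; funext τ
        rw [lintegral_const_mul' _ _ (by simp [lapK] : lapK g s τ ≠ ∞)]
    _ = ∫⁻ τ, lapK g s τ * ∫⁻ t, lapK g s t := by
        congr 1; funext τ
        rw [lintegral_sub_right_eq_self (lapK g s) τ]
    _ = (∫⁻ t, lapK g s t) * ∫⁻ t, lapK g s t := lintegral_mul_const _ hK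
    _ = _ := by rw [lintegral_Ioi_of_zero _ hlapzero]

/-! ### Auxiliary: injectivity of the Laplace transform -/

lemma exp_neg_image : (fun t : ℝ => Real.exp (-t)) '' (Ioi 0) = Ioo 0 1 := by
  ext x
  constructor
  · rintro ⟨t, ht, rfl⟩
    exact ⟨Real.exp_pos _, Real.exp_lt_one_iff.mpr (by simpa using ht)⟩
  · intro hx
    exact ⟨-Real.log x, by simpa using Real.log_neg hx.1 hx.2,
      by simp [Real.exp_log hx.1]⟩

lemma exp_neg_deriv : ∀ x ∈ Ioi (0:ℝ),
    HasDerivWithinAt (fun t : ℝ => Real.exp (-t)) (-Real.exp (-x)) (Ioi 0) x := by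
  intro x _
  have h := (Real.hasDerivAt_exp (-x)).comp x (hasDerivAt_neg x)
  simpa [Function.comp_def, mul_neg_one] using h.hasDerivWithinAt

lemma exp_neg_injOn : InjOn (fun t : ℝ => Real.exp (-t)) (Ioi 0) :=
  fun _ _ _ _ h => neg_injective (Real.exp_injective h)

lemma change_of_var (G : ℝ → ℝ) :
    ∫ x in Ioo (0:ℝ) 1, G x = ∫ t in Ioi 0, Real.exp (-t) * G (Real.exp (-t)) := by
  rw [← exp_neg_image,
    integral_image_eq_integral_abs_deriv_smul measurableSet_Ioi exp_neg_deriv exp_neg_injOn]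
  refine setIntegral_congr_fun measurableSet_Ioi fun t _ => ?_
  simp [abs_of_pos (Real.exp_pos _)]

lemma change_of_var_int (G : ℝ → ℝ) :
    IntegrableOn G (Ioo (0:ℝ) 1) ↔
      IntegrableOn (fun t => Real.exp (-t) * G (Real.exp (-t))) (Ioi 0) := by
  rw [← exp_neg_image,
    integrableOn_image_iff_integrableOn_abs_deriv_smul measurableSet_Ioi exp_neg_deriv
      exp_neg_injOn]
  have h : (fun t => |(-Real.exp (-t))| • G (Real.exp (-t)))
      = fun t => Real.exp (-t) * G (Real.exp (-t)) := by
    funext t; simp [abs_of_pos (Real.exp_pos _)]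
  rw [h]

lemma laplace_injective (h : ℝ → ℝ) (hc : ContinuousOn h (Ioi 0))
    (hi : ∀ s : ℝ, 0 < s → IntegrableOn (fun t => Real.exp (-s * t) * h t) (Ioi 0))
    (hz : ∀ s : ℝ, 0 < s → (∫ t in Ioi 0, Real.exp (-s * t) * h t) = 0) :
    ∀ t : ℝ, 0 < t → h t = 0 := by
  set H : ℝ → ℝ := fun x => h (-Real.log x) with hHdef
  have key : ∀ (n : ℕ) (t : ℝ),
      Real.exp (-t) * (Real.exp (-t) ^ n * H (Real.exp (-t)))
        = Real.exp (-((n : ℝ) + 1) * t) * h t := by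
    intro n t
    have h1 : H (Real.exp (-t)) = h t := by
      rw [hHdef]; simp only [Real.log_exp, neg_neg]
    rw [h1, ← mul_assoc, ← pow_succ', ← Real.exp_nat_mul]
    congr 2
    push_cast
    ring
  have moment : ∀ n : ℕ, (∫ x in Ioo (0:ℝ) 1, x ^ n * H x) = 0 := by
    intro n
    rw [change_of_var]
    rw [setIntegral_congr_fun measurableSet_Ioi fun t _ => key n t]
    exact hz _ (by positivity)
  have Hint : ∀ n : ℕ, IntegrableOn (fun x => x ^ n * H x) (Ioo (0:ℝ) 1) := by
    intro n
    rw [change_of_var_int]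
    refine (hi ((n : ℝ) + 1) (by positivity)).congr_fun ?_ measurableSet_Ioi
    intro t _
    exact (key n t).symm
  have Hint0 : IntegrableOn H (Ioo (0:ℝ) 1) := by
    have := Hint 0
    simpa using this
  have polyint : ∀ p : Polynomial ℝ,
      IntegrableOn (fun x => p.eval x * H x) (Ioo (0:ℝ) 1) := by
    intro p
    induction p using Polynomial.induction_on' with
    | add p q hp hq =>
        refine IntegrableOn.congr_fun (hp.add hq) (fun x _ => ?_) measurableSet_Ioo
        simp [add_mul]
    | monomial n a =>
        refine IntegrableOn.congr_fun ((Hint n).const_mul a) (fun x _ => ?_) measurableSet_Ioo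
        simp [Polynomial.eval_monomial, mul_assoc]
  have polyzero : ∀ p : Polynomial ℝ,
      (∫ x in Ioo (0:ℝ) 1, p.eval x * H x) = 0 := by
    intro p
    induction p using Polynomial.induction_on' with
    | add p q hp hq =>
        have h1 : (fun x => (p + q).eval x * H x)
            = fun x => p.eval x * H x + q.eval x * H x := by
          funext x; simp [add_mul]
        rw [h1, integral_add (polyint p) (polyint q), hp, hq, add_zero]
    | monomial n a =>
        have h1 : (fun x => ((Polynomial.monomial n) a).eval x * H x)
            = fun x => a * (x ^ n * H x) := by
          funext x; simp [Polynomial.eval_monomial, mul_assoc]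
        rw [h1, integral_const_mul, moment n, mul_zero]
  set ψ : ℝ → ℝ := (Ioo (0:ℝ) 1).indicator H with hψdef
  have ψint : Integrable ψ := (integrable_indicator_iff measurableSet_Ioo).mpr Hint0
  have test : ∀ (gT : ℝ → ℝ), ContDiff ℝ ((⊤ : ℕ∞) : WithTop ℕ∞) gT → HasCompactSupport gT →
      (∫ x, gT x • ψ x) = 0 := by
    intro gT hgT hsupp
    have h1 : (∫ x, gT x • ψ x) = ∫ x in Ioo (0:ℝ) 1, gT x * H x := by
      rw [← integral_indicator measurableSet_Ioo]
      congr 1; funext x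
      by_cases hx : x ∈ Ioo (0:ℝ) 1
      · rw [hψdef, indicator_of_mem hx, indicator_of_mem hx, smul_eq_mul]
      · rw [hψdef, indicator_of_notMem hx, indicator_of_notMem hx, smul_zero]
    rw [h1]
    obtain ⟨C, hC⟩ :=
      (isCompact_Icc (a := (0:ℝ)) (b := 1)).exists_bound_of_continuousOn
        hgT.continuous.continuousOn
    have gTint : IntegrableOn (fun x => gT x * H x) (Ioo (0:ℝ) 1) := by
      refine Integrable.bdd_mul (c := C) Hint0 hgT.continuous.aestronglyMeasurable.restrict ?_
      refine (ae_restrict_iff' measurableSet_Ioo).mpr (ae_of_all _ fun x hx => ?_)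
      exact hC x (Ioo_subset_Icc_self hx)
    set I := ∫ x in Ioo (0:ℝ) 1, gT x * H x with hI
    set M := ∫ x in Ioo (0:ℝ) 1, |H x| with hM
    have hM0 : 0 ≤ M := integral_nonneg fun x => abs_nonneg _
    have hM1 : (0:ℝ) < M + 1 := by linarith
    have habs : ∀ ε : ℝ, 0 < ε → |I| ≤ ε := by
      intro ε hε
      obtain ⟨p, hp⟩ := exists_polynomial_near_of_continuousOn 0 1 gT
        hgT.continuous.continuousOn (ε / (M + 1)) (by positivity)
      have hIp : I = ∫ x in Ioo (0:ℝ) 1, (gT x - p.eval x) * H x := by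
        have h2 : (fun x => (gT x - p.eval x) * H x)
            = fun x => gT x * H x - p.eval x * H x := by funext x; ring
        rw [h2, integral_sub gTint (polyint p), polyzero p, sub_zero, hI]
      have hsub : IntegrableOn (fun x => (gT x - p.eval x) * H x) (Ioo (0:ℝ) 1) := by
        have h2 : (fun x => (gT x - p.eval x) * H x)
            = fun x => gT x * H x - p.eval x * H x := by funext x; ring
        rw [h2]; exact gTint.sub (polyint p)
      have hb1 : |I| ≤ ∫ x in Ioo (0:ℝ) 1, (ε / (M + 1)) * |H x| := by
        rw [hIp]
        calc |∫ x in Ioo (0:ℝ) 1, (gT x - p.eval x) * H x|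
            ≤ ∫ x in Ioo (0:ℝ) 1, |gT x - p.eval x| * |H x| := by
              simpa [Real.norm_eq_abs, abs_mul] using
                norm_integral_le_integral_norm (μ := volume.restrict (Ioo (0:ℝ) 1))
                  (fun x => (gT x - p.eval x) * H x)
          _ ≤ _ := by
              refine setIntegral_mono_on
                (IntegrableOn.congr_fun hsub.abs (fun x _ => abs_mul _ _) measurableSet_Ioo)
                (Hint0.abs.const_mul _)
                measurableSet_Ioo fun x hx => ?_
              refine mul_le_mul_of_nonneg_right ?_ (abs_nonneg _)
              have := hp x (Ioo_subset_Icc_self hx)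
              rw [abs_sub_comm] at this
              exact this.le
      rw [integral_const_mul] at hb1
      calc |I| ≤ ε / (M + 1) * M := hb1
        _ ≤ ε / (M + 1) * (M + 1) := by
            refine mul_le_mul_of_nonneg_left (by linarith) (by positivity)
        _ = ε := div_mul_cancel₀ _ (ne_of_gt hM1)
    have : |I| ≤ 0 := le_of_forall_pos_le_add (by intro ε hε; simpa using habs ε hε)
    have : |I| = 0 := le_antisymm this (abs_nonneg _)
    exact abs_eq_zero.mp this
  have haezero : ∀ᵐ x, ψ x = 0 :=
    ae_eq_zero_of_integral_contDiff_smul_eq_zero ψint.locallyIntegrable test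
  -- conclude pointwise
  intro t ht
  by_contra hne
  have hx : Real.exp (-t) ∈ Ioo (0:ℝ) 1 :=
    ⟨Real.exp_pos _, Real.exp_lt_one_iff.mpr (by simpa using ht)⟩
  have hHcont : ContinuousOn H (Ioo (0:ℝ) 1) := by
    have hlog : ContinuousOn (fun x : ℝ => -Real.log x) (Ioo 0 1) :=
      (Real.continuousOn_log.mono fun x hx => ne_of_gt hx.1).neg
    have hmaps : MapsTo (fun x : ℝ => -Real.log x) (Ioo 0 1) (Ioi 0) := fun x hx =>
      by simpa using Real.log_neg hx.1 hx.2
    simpa [Function.comp_def, hHdef] using hc.comp hlog hmaps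
  have hCA : ContinuousAt H (Real.exp (-t)) :=
    hHcont.continuousAt (Ioo_mem_nhds hx.1 hx.2)
  have hHval : H (Real.exp (-t)) = h t := by
    rw [hHdef]; simp only [Real.log_exp, neg_neg]
  have hev : ∀ᶠ x in nhds (Real.exp (-t)), H x ≠ 0 :=
    hCA.eventually_ne (by rw [hHval]; exact hne)
  have hev2 : {x : ℝ | ψ x ≠ 0} ∈ nhds (Real.exp (-t)) := by
    filter_upwards [hev, Ioo_mem_nhds hx.1 hx.2] with x h1 h2
    rw [hψdef]
    simpa [indicator_of_mem h2] using h1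
  have hpos : (0:ℝ≥0∞) < volume {x : ℝ | ψ x ≠ 0} := MeasureTheory.Measure.measure_pos_of_mem_nhds volume hev2
  have hzero : volume {x : ℝ | ψ x ≠ 0} = 0 := by
    simpa [ae_iff] using haezero
  rw [hzero] at hpos
  exact lt_irrefl _ hpos

end SelfConvAux

open SelfConvAux Real
open scoped ENNReal

/-- If the self-convolution in time of `F(·, y)` is a function `γ(t)` independent of the
point `y`, and each `F(·,y)` is continuous, nonnegative, with convergent Laplace transform,
then `F(t, ·)` is constant in `y` for each `t > 0`. -/
theorem selfconvolution_independent_of_point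
    {Y : Type*} [Nonempty Y] (F : ℝ → Y → ℝ)
    (hcont : ∀ y : Y, ContinuousOn (fun t => F t y) (Set.Ioi 0))
    (hpos : ∀ (y : Y) (t : ℝ), 0 < t → 0 ≤ F t y)
    (hint : ∀ (y : Y) (s : ℝ), 0 < s →
      IntegrableOn (fun t : ℝ => Real.exp (-s * t) * F t y) (Set.Ioi 0) volume)
    (γ : ℝ → ℝ)
    (hconv : ∀ (t : ℝ), 0 < t → ∀ y : Y,
      (∫ τ in Set.Ioo (0 : ℝ) t, F τ y * F (t - τ) y) = γ t) :
    ∀ (t : ℝ), 0 < t → ∀ y₁ y₂ : Y, F t y₁ = F t y₂ := by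
  classical
  -- extended functions
  set g : Y → ℝ → ℝ := fun y => (Ioi (0:ℝ)).indicator (fun u => F u y) with hgdef
  have hgmeas : ∀ y, Measurable (g y) := by
    intro y
    rw [hgdef]
    have := ContinuousOn.measurable_piecewise (g := fun _ : ℝ => (0:ℝ))
      (hcont y) continuousOn_const measurableSet_Ioi
    rwa [show (fun _ : ℝ => (0:ℝ)) = 0 from rfl, Set.piecewise_eq_indicator] at this
  have hg0 : ∀ y, ∀ u ≤ (0:ℝ), g y u = 0 := fun y u hu =>
    indicator_of_notMem (by simpa using hu) _
  have hgF : ∀ y, ∀ u ∈ Ioi (0:ℝ), g y u = F u y := fun y u hu =>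
    indicator_of_mem hu _
  have hgnn : ∀ y u, 0 ≤ g y u := by
    intro y u
    by_cases hu : u ∈ Ioi (0:ℝ)
    · rw [hgF y u hu]; exact hpos y u hu
    · rw [hg0 y u (by simpa using hu)]
  -- Laplace transforms
  set Λ : Y → ℝ → ℝ≥0∞ := fun y s => ∫⁻ u in Ioi 0, lapK (g y) s u with hΛdef
  have hΛeq : ∀ y s, 0 < s → Λ y s = ENNReal.ofReal (∫ u in Ioi 0, Real.exp (-s * u) * F u y) := by
    intro y s hs
    have h1 : ∀ᵐ u ∂(volume.restrict (Ioi (0:ℝ))), 0 ≤ Real.exp (-s * u) * F u y := by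
      refine (ae_restrict_iff' measurableSet_Ioi).mpr (ae_of_all _ fun u hu => ?_)
      exact mul_nonneg (Real.exp_pos _).le (hpos y u hu)
    have h2 : Λ y s = ∫⁻ u in Ioi 0, ENNReal.ofReal (Real.exp (-s * u) * F u y) := by
      simp only [hΛdef]
      exact setLIntegral_congr_fun measurableSet_Ioi
        (fun u hu => by rw [lapK, hgF y u hu])
    rw [h2, ← ofReal_integral_eq_lintegral_ofReal (hint y s hs) h1]
  have hΛfin : ∀ y s, 0 < s → Λ y s ≠ ⊤ := by
    intro y s hs; rw [hΛeq y s hs]; exact ENNReal.ofReal_ne_top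
  -- a.e. finiteness of the self-convolution
  have hfiny : ∀ y, ∀ᵐ t ∂(volume.restrict (Ioi (0:ℝ))), selfconv (g y) t ≠ ⊤ := by
    intro y
    have h1 : (∫⁻ t in Ioi 0, ENNReal.ofReal (Real.exp (-(1:ℝ) * t)) * selfconv (g y) t) ≠ ⊤ := by
      rw [laplace_selfconv (hgmeas y) (hg0 y) 1]
      exact ENNReal.mul_ne_top (hΛfin y 1 one_pos) (hΛfin y 1 one_pos)
    have hmeas : Measurable fun t =>
        ENNReal.ofReal (Real.exp (-(1:ℝ) * t)) * selfconv (g y) t :=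
      (ENNReal.measurable_ofReal.comp
        (Real.measurable_exp.comp (measurable_id.const_mul _))).mul
        (measurable_selfconv (hgmeas y))
    filter_upwards [ae_lt_top hmeas h1] with t ht2
    intro hcontra
    rw [hcontra] at ht2
    have : ENNReal.ofReal (Real.exp (-(1:ℝ) * t)) ≠ 0 := by
      simp [ENNReal.ofReal_eq_zero, not_le, Real.exp_pos]
    rw [ENNReal.mul_top this] at ht2
    exact lt_irrefl _ ht2
  -- identification of the self-convolution with γ
  have hval : ∀ y (t : ℝ), 0 < t → selfconv (g y) t ≠ ⊤ →
      selfconv (g y) t = ENNReal.ofReal (γ t) := by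
    intro y t ht hfin
    have hrw : selfconv (g y) t = ∫⁻ τ in Ioo 0 t, ENNReal.ofReal (F τ y * F (t - τ) y) := by
      rw [selfconv_restrict (hg0 y) t]
      refine setLIntegral_congr_fun measurableSet_Ioo (fun τ hτ => ?_)
      rw [hgF y τ hτ.1, hgF y (t - τ) (by simp [hτ.2] : t - τ ∈ Ioi 0)]
      rw [ENNReal.ofReal_mul (hpos y τ hτ.1)]
    have hnn : ∀ᵐ τ ∂(volume.restrict (Ioo (0:ℝ) t)), 0 ≤ F τ y * F (t - τ) y := by
      refine (ae_restrict_iff' measurableSet_Ioo).mpr (ae_of_all _ fun τ hτ => ?_)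
      exact mul_nonneg (hpos y τ hτ.1) (hpos y (t - τ) (by linarith [hτ.2]))
    have hsm : AEStronglyMeasurable (fun τ => F τ y * F (t - τ) y)
        (volume.restrict (Ioo (0:ℝ) t)) := by
      have hc1 : ContinuousOn (fun τ => F τ y) (Ioo 0 t) :=
        (hcont y).mono fun τ hτ => hτ.1
      have hc2 : ContinuousOn (fun τ => F (t - τ) y) (Ioo 0 t) := by
        have := (hcont y).comp (continuousOn_const.sub continuousOn_id)
          (fun τ (hτ : τ ∈ Ioo 0 t) => by simp [hτ.2] : MapsTo (fun τ : ℝ => t - τ) (Ioo 0 t) (Ioi 0))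
        simpa [Function.comp_def] using this
      exact (hc1.mul hc2).aestronglyMeasurable measurableSet_Ioo
    have hintc : IntegrableOn (fun τ => F τ y * F (t - τ) y) (Ioo (0:ℝ) t) := by
      refine ⟨hsm, ?_⟩
      rw [hasFiniteIntegral_iff_norm]
      have : (∫⁻ τ in Ioo (0:ℝ) t, ENNReal.ofReal ‖F τ y * F (t - τ) y‖) < ⊤ := by
        have heq : (∫⁻ τ in Ioo (0:ℝ) t, ENNReal.ofReal ‖F τ y * F (t - τ) y‖)
            = ∫⁻ τ in Ioo (0:ℝ) t, ENNReal.ofReal (F τ y * F (t - τ) y) := by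
          refine lintegral_congr_ae ?_
          filter_upwards [hnn] with τ hτ
          rw [Real.norm_eq_abs, abs_of_nonneg hτ]
        rw [heq, ← hrw]
        exact lt_top_iff_ne_top.mpr hfin
      exact this
    have h2 := ofReal_integral_eq_lintegral_ofReal hintc hnn
    rw [hrw, ← h2, hconv t ht y]
  intro t ht y₁ y₂
  -- equality of Laplace transforms
  have main : ∀ s : ℝ, 0 < s →
      (∫ u in Ioi 0, Real.exp (-s * u) * F u y₁) = ∫ u in Ioi 0, Real.exp (-s * u) * F u y₂ := by
    intro s hs
    have hae : ∀ᵐ τ ∂(volume.restrict (Ioi (0:ℝ))),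
        selfconv (g y₁) τ = selfconv (g y₂) τ := by
      filter_upwards [hfiny y₁, hfiny y₂, ae_restrict_mem measurableSet_Ioi]
        with τ h1 h2 h3
      rw [hval y₁ τ h3 h1, hval y₂ τ h3 h2]
    have hsq : Λ y₁ s * Λ y₁ s = Λ y₂ s * Λ y₂ s := by
      rw [← laplace_selfconv (hgmeas y₁) (hg0 y₁) s, ← laplace_selfconv (hgmeas y₂) (hg0 y₂) s]
      refine lintegral_congr_ae ?_
      filter_upwards [hae] with τ hτ
      rw [hτ]
    have htr : (Λ y₁ s).toReal = (Λ y₂ s).toReal := by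
      have := congrArg ENNReal.toReal hsq
      rw [ENNReal.toReal_mul, ENNReal.toReal_mul] at this
      exact (mul_self_inj_of_nonneg ENNReal.toReal_nonneg ENNReal.toReal_nonneg).mp this
    have hnn1 : (0:ℝ) ≤ ∫ u in Ioi 0, Real.exp (-s * u) * F u y₁ :=
      setIntegral_nonneg measurableSet_Ioi fun u hu =>
        mul_nonneg (Real.exp_pos _).le (hpos y₁ u hu)
    have hnn2 : (0:ℝ) ≤ ∫ u in Ioi 0, Real.exp (-s * u) * F u y₂ :=
      setIntegral_nonneg measurableSet_Ioi fun u hu =>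
        mul_nonneg (Real.exp_pos _).le (hpos y₂ u hu)
    rw [hΛeq y₁ s hs, hΛeq y₂ s hs, ENNReal.toReal_ofReal hnn1, ENNReal.toReal_ofReal hnn2]
      at htr
    exact htr
  -- the difference has vanishing Laplace transform
  have hzero : ∀ s : ℝ, 0 < s →
      (∫ u in Ioi 0, Real.exp (-s * u) * (F u y₁ - F u y₂)) = 0 := by
    intro s hs
    have h1 : (fun u => Real.exp (-s * u) * (F u y₁ - F u y₂))
        = fun u => Real.exp (-s * u) * F u y₁ - Real.exp (-s * u) * F u y₂ := by
      funext u; ring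
    rw [h1, integral_sub (hint y₁ s hs) (hint y₂ s hs), main s hs, sub_self]
  have hisub : ∀ s : ℝ, 0 < s →
      IntegrableOn (fun u => Real.exp (-s * u) * (F u y₁ - F u y₂)) (Ioi 0) := by
    intro s hs
    refine IntegrableOn.congr_fun ((hint y₁ s hs).sub (hint y₂ s hs))
      (fun u _ => ?_) measurableSet_Ioi
    simp only [Pi.sub_apply]
    ring
  have h0 := laplace_injective (fun u => F u y₁ - F u y₂)
    ((hcont y₁).sub (hcont y₂)) hisub hzero t ht
  simp only [sub_eq_zero] at h0
  exact h0
end
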